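/- Let F be a discrete Morse function on a finite regular cell complex X. If α^{(i)} < β^{(j)} with j ≥ i + 2 and F(α) > F(β), then there exists a chain of cells α = σ_i < σ_{i+1} < ⋯ < σ_{j−1} < σ_j = β with dim σ_k = k and F(σ_{j−1}) > F(α) > F(β). -/
import Mathlib


/-- A finite regular cell complex, modeled combinatorially as a finite graded poset of
cells: `face α β` means `α` is a (proper, iterated) face of `β`.  Regularity provides the
diamond property (between a cell and a codimension-two face there are at least two
intermediate cells) and existence of intermediate cells in any interval. -/
structure RegularCellComplex where
  Cell : Type
  [fintypeCell : Fintype Cell]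
  [decEqCell : DecidableEq Cell]
  face : Cell → Cell → Prop
  dim : Cell → ℕ
  face_trans : ∀ {α β γ}, face α β → face β γ → face α γ
  face_dim : ∀ {α β}, face α β → dim α < dim β
  diamond : ∀ {α β}, face α β → dim β = dim α + 2 →
    ∃ δ₁ δ₂, δ₁ ≠ δ₂ ∧ dim δ₁ = dim α + 1 ∧ dim δ₂ = dim α + 1 ∧
      face α δ₁ ∧ face δ₁ β ∧ face α δ₂ ∧ face δ₂ β
  interval : ∀ {α β}, face α β → dim α + 2 ≤ dim β →
    ∃ δ, dim δ = dim α + 1 ∧ face α δ ∧ face δ β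

attribute [instance] RegularCellComplex.fintypeCell RegularCellComplex.decEqCell

/-- `F` is a discrete Morse function (Forman): for each cell there is at most one
coface of dimension one higher with value `≤`, and at most one face of dimension one
lower with value `≥`. -/
def IsDiscreteMorse (X : RegularCellComplex) (F : X.Cell → ℝ) : Prop :=
  ∀ α : X.Cell,
    {β | X.face α β ∧ X.dim β = X.dim α + 1 ∧ F β ≤ F α}.Subsingleton ∧
    {γ | X.face γ α ∧ X.dim γ + 1 = X.dim α ∧ F α ≤ F γ}.Subsingleton

/-- `F` is generic: distinct values on incident cells. -/
def IsGeneric (X : RegularCellComplex) (F : X.Cell → ℝ) : Prop :=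
  ∀ {α β : X.Cell}, X.face α β → F α ≠ F β

/-- `F` is tame: faces of codimension at least two have strictly smaller value. -/
def IsTame (X : RegularCellComplex) (F : X.Cell → ℝ) : Prop :=
  ∀ {α β : X.Cell}, X.face α β → X.dim α + 2 ≤ X.dim β → F α < F β

/-- A cell `α` is critical for `F`: no exceptional coface and no exceptional face. -/
def IsCritical (X : RegularCellComplex) (F : X.Cell → ℝ) (α : X.Cell) : Prop :=
  (¬ ∃ β, X.face α β ∧ X.dim β = X.dim α + 1 ∧ F β ≤ F α) ∧
  (¬ ∃ γ, X.face γ α ∧ X.dim γ + 1 = X.dim α ∧ F α ≤ F γ)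

/-- If `F` is a discrete Morse function, `α < β`, `dim β ≥ dim α + 2` and
`F α > F β`, then there is a saturated chain `α = σ_{dim α} < σ_{dim α + 1} < ⋯ < σ_{dim β} = β`
with `dim σ_k = k` whose penultimate cell satisfies `F (σ_{dim β − 1}) > F α > F β`. -/
/- From a codimension-two situation, extract an intermediate cell of value `> F α`. -/
lemma exists_big_mid (X : RegularCellComplex) (F : X.Cell → ℝ)
    (hF : IsDiscreteMorse X F) {α γ : X.Cell} (h : X.face α γ)
    (hd : X.dim γ = X.dim α + 2) :
    ∃ δ, X.dim δ = X.dim α + 1 ∧ X.face α δ ∧ X.face δ γ ∧ F α < F δ := by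
  obtain ⟨δ₁, δ₂, hne, hd1, hd2, hf1, hf1g, hf2, hf2g⟩ := X.diamond h hd
  by_cases h1 : F α < F δ₁
  · exact ⟨δ₁, hd1, hf1, hf1g, h1⟩
  · refine ⟨δ₂, hd2, hf2, hf2g, ?_⟩
    by_contra h2
    push_neg at h1 h2
    exact hne ((hF α).1 ⟨hf1, hd1, h1⟩ ⟨hf2, hd2, h2⟩)

lemma stmt8_aux (X : RegularCellComplex) (F : X.Cell → ℝ)
    (hF : IsDiscreteMorse X F) :
    ∀ n, 2 ≤ n → ∀ α β : X.Cell, X.face α β → X.dim β = X.dim α + n → F β < F α →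
    ∃ σ : ℕ → X.Cell,
      σ (X.dim α) = α ∧ σ (X.dim β) = β ∧
      (∀ l, X.dim α ≤ l → l < X.dim β → X.face (σ l) (σ (l + 1))) ∧
      (∀ l, X.dim α ≤ l → l ≤ X.dim β → X.dim (σ l) = l) ∧
      F α < F (σ (X.dim β - 1)) := by
  intro n hn
  induction n, hn using Nat.le_induction with
  | base =>
    intro α β hface hβ hval
    obtain ⟨δ, hdδ, hαδ, hδβ, hFδ⟩ := exists_big_mid X F hF hface hβ
    refine ⟨fun l => if l = X.dim α then α else if l = X.dim α + 1 then δ else β,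
      ?_, ?_, ?_, ?_, ?_⟩
    · simp
    · have h1 : X.dim β ≠ X.dim α := by omega
      have h2 : X.dim β ≠ X.dim α + 1 := by omega
      simp [h1, h2]
    · intro l hl hl'
      have : l = X.dim α ∨ l = X.dim α + 1 := by omega
      rcases this with rfl | rfl
      · simpa using hαδ
      · have h1 : X.dim α + 1 ≠ X.dim α := by omega
        have h2 : X.dim α + 1 + 1 ≠ X.dim α := by omega
        have h3 : X.dim α + 1 + 1 ≠ X.dim α + 1 := by omega
        simpa [h1, h2, h3] using hδβ
    · intro l hl hl'
      have : l = X.dim α ∨ l = X.dim α + 1 ∨ l = X.dim α + 2 := by omega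
      rcases this with rfl | rfl | rfl
      · simp
      · have h1 : X.dim α + 1 ≠ X.dim α := by omega
        simp [h1, hdδ]
      · have h1 : X.dim α + 2 ≠ X.dim α := by omega
        have h2 : X.dim α + 2 ≠ X.dim α + 1 := by omega
        simp [h1, h2, hβ]
    · have h0 : X.dim β - 1 = X.dim α + 1 := by omega
      have h1 : X.dim α + 1 ≠ X.dim α := by omega
      rw [h0]
      simpa [h1] using hFδ
  | succ n hn ih =>
    intro α β hface hβ hval
    -- find an intermediate cell γ of dimension dim α + 2
    obtain ⟨δ0, hdδ0, hαδ0, hδ0β⟩ := X.interval hface (by omega)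
    obtain ⟨γ, hdγ, hδ0γ, hγβ⟩ := X.interval hδ0β (by omega)
    have hαγ : X.face α γ := X.face_trans hαδ0 hδ0γ
    have hdγ' : X.dim γ = X.dim α + 2 := by omega
    obtain ⟨δ, hdδ, hαδ, hδγ, hFδ⟩ := exists_big_mid X F hF hαγ hdγ'
    have hδβ : X.face δ β := X.face_trans hδγ hγβ
    have hβδ : X.dim β = X.dim δ + n := by omega
    obtain ⟨σ', hσδ, hσβ, hσface, hσdim, hσF⟩ :=
      ih δ β hδβ hβδ (lt_trans hval hFδ)
    refine ⟨fun l => if l = X.dim α then α else σ' l, by simp, ?_, ?_, ?_, ?_⟩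
    · have h1 : X.dim β ≠ X.dim α := by omega
      simpa [h1] using hσβ
    · intro l hl hl'
      by_cases h : l = X.dim α
      · subst h
        have h2 : X.dim α + 1 ≠ X.dim α := by omega
        have : σ' (X.dim α + 1) = δ := by rw [← hdδ]; exact hσδ
        simpa [h2, this] using hαδ
      · have h2 : l + 1 ≠ X.dim α := by omega
        simpa [h, h2] using hσface l (by omega) hl'
    · intro l hl hl'
      by_cases h : l = X.dim α
      · simp [h]
      · simpa [h] using hσdim l (by omega) hl'
    · have h1 : X.dim β - 1 ≠ X.dim α := by omega
      simp only [if_neg h1]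
      have : F δ < F (σ' (X.dim β - 1)) := by
        have := hσF
        rwa [hβδ] at this ⊢
      calc F α < F δ := hFδ
        _ < F (σ' (X.dim β - 1)) := this
      
theorem stmt8 (X : RegularCellComplex) (F : X.Cell → ℝ)
    (hF : IsDiscreteMorse X F) (α β : X.Cell)
    (hface : X.face α β) (hdim : X.dim α + 2 ≤ X.dim β) (hval : F β < F α) :
    ∃ σ : ℕ → X.Cell,
      σ (X.dim α) = α ∧ σ (X.dim β) = β ∧
      (∀ l, X.dim α ≤ l → l < X.dim β → X.face (σ l) (σ (l + 1))) ∧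
      (∀ l, X.dim α ≤ l → l ≤ X.dim β → X.dim (σ l) = l) ∧
      F α < F (σ (X.dim β - 1)) :=
  stmt8_aux X F hF (X.dim β - X.dim α) (by omega) α β hface (by omega) hval
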